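/- arXiv:0906.0989 — 2 statements merged into one kernel-verified Lean document; each statement's English description precedes it below -/
import Mathlib

section
/- Let Φ_a and Φ_b denote the cumulative distribution functions of centered Gaussian random variables with variances a = (1+ε)^{−1} and b = (1−ε)^{−1} respectively. Then there exist constants C > 0 and ε₀ ∈ (0,1) such that for all 0 < ε < ε₀ and all x ∈ ℝ, | Φ_a(x) − Φ_b(x) − ε · x e^{−x²/2}/√(2π) | ≤ C ε³. -/
open MeasureTheory ProbabilityTheory Filter Real Set

/-- Standard normal cumulative distribution function `Φ`. -/
noncomputable def stdGaussCDF (x : ℝ) : ℝ := ((gaussianReal 0 1) (Set.Iic x)).toReal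

namespace GaussPerturb

/-! ### The standard Gaussian pdf and the derivative of the cdf -/

noncomputable def phi (t : ℝ) : ℝ := (Real.sqrt (2 * π))⁻¹ * Real.exp (- t ^ 2 / 2)

lemma phi_eq : gaussianPDFReal 0 1 = phi := by
  ext t
  simp [gaussianPDFReal, phi]

lemma continuous_phi : Continuous phi := by
  unfold phi; fun_prop

lemma integrable_phi : Integrable phi := phi_eq ▸ integrable_gaussianPDFReal 0 1

lemma stdGaussCDF_eq (x : ℝ) : stdGaussCDF x = ∫ t in Set.Iic x, phi t := by
  rw [stdGaussCDF, gaussianReal_apply_eq_integral 0 one_ne_zero, ENNReal.toReal_ofReal, phi_eq]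
  rw [phi_eq]
  exact setIntegral_nonneg measurableSet_Iic fun t _ => by
    unfold phi; positivity

lemma hasDerivAt_stdGaussCDF (y : ℝ) : HasDerivAt stdGaussCDF (phi y) y := by
  have h := intervalIntegral.integral_hasDerivAt_right
    (continuous_phi.intervalIntegrable 0 y)
    (continuous_phi.stronglyMeasurableAtFilter _ _) continuous_phi.continuousAt
  have heq : stdGaussCDF = fun u => (∫ t in (0:ℝ)..u, phi t) + stdGaussCDF 0 := by
    funext u
    rw [stdGaussCDF_eq, stdGaussCDF_eq, ← intervalIntegral.integral_Iic_sub_Iic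
      integrable_phi.integrableOn integrable_phi.integrableOn]
    ring
  rw [heq]
  exact h.add_const _

/-! ### Auxiliary functions: derivatives of `s ↦ Φ(x√(1+s))` -/

noncomputable def Q (s : ℝ) : ℝ := (Real.sqrt (1 + s))⁻¹
noncomputable def E (x s : ℝ) : ℝ := Real.exp (-(x ^ 2 * (1 + s)) / 2)
noncomputable def G1 (x s : ℝ) : ℝ := x / (2 * Real.sqrt (2 * π)) * (E x s * Q s)
noncomputable def G2 (x s : ℝ) : ℝ :=
  -(x / (4 * Real.sqrt (2 * π))) * (E x s * (x ^ 2 * Q s + Q s ^ 3))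
noncomputable def G3 (x s : ℝ) : ℝ :=
  x / (8 * Real.sqrt (2 * π)) *
    (E x s * (x ^ 4 * Q s + 2 * x ^ 2 * Q s ^ 3 + 3 * Q s ^ 5))

lemma sqrt_two_pi_pos : 0 < Real.sqrt (2 * π) := Real.sqrt_pos.mpr (by positivity)

lemma one_le_sqrt_two_pi : 1 ≤ Real.sqrt (2 * π) := by
  rw [show (1:ℝ) = Real.sqrt 1 from (Real.sqrt_one).symm]
  exact Real.sqrt_le_sqrt (by nlinarith [Real.pi_gt_three])

lemma sqrt_pos' {s : ℝ} (hs : -1 < s) : 0 < Real.sqrt (1 + s) :=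
  Real.sqrt_pos.mpr (by linarith)

lemma Q_pos {s : ℝ} (hs : -1 < s) : 0 < Q s := by
  rw [Q]; exact inv_pos.mpr (sqrt_pos' hs)

lemma hasDerivAt_sqrt1p {s : ℝ} (hs : -1 < s) :
    HasDerivAt (fun s : ℝ => Real.sqrt (1 + s)) (1 / (2 * Real.sqrt (1 + s))) s := by
  have h1 : HasDerivAt (fun s : ℝ => 1 + s) 1 s := (hasDerivAt_id s).const_add 1
  have h2 := (Real.hasDerivAt_sqrt (show (1:ℝ) + s ≠ 0 by linarith)).comp s h1
  simpa [Function.comp_def] using h2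

lemma hasDerivAt_Q {s : ℝ} (hs : -1 < s) : HasDerivAt Q (-(Q s) ^ 3 / 2) s := by
  have h := (hasDerivAt_sqrt1p hs).inv (ne_of_gt (sqrt_pos' hs))
  refine h.congr_deriv ?_
  have h3 := (sqrt_pos' hs).ne'
  rw [Q]
  set r := Real.sqrt (1 + s) with hr
  field_simp

lemma hasDerivAt_E (x : ℝ) (s : ℝ) :
    HasDerivAt (E x) (-(x ^ 2) / 2 * E x s) s := by
  have h1 : HasDerivAt (fun s : ℝ => -(x ^ 2 * (1 + s)) / 2) (-(x ^ 2) / 2) s := by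
    have := (((hasDerivAt_id s).const_add (1 : ℝ)).const_mul (x ^ 2)).neg.div_const 2
    simpa using this
  have := h1.exp
  rw [show Real.exp (-(x ^ 2 * (1 + s)) / 2) * (-(x ^ 2) / 2)
      = -(x ^ 2) / 2 * E x s by rw [E]; ring] at this
  exact this

lemma hasDerivAt_G1 (x : ℝ) {s : ℝ} (hs : -1 < s) :
    HasDerivAt (G1 x) (G2 x s) s := by
  have h := ((hasDerivAt_E x s).mul (hasDerivAt_Q hs)).const_mul (x / (2 * Real.sqrt (2 * π)))
  refine h.congr_deriv ?_
  rw [G2]; ring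

lemma hasDerivAt_G2 (x : ℝ) {s : ℝ} (hs : -1 < s) :
    HasDerivAt (G2 x) (G3 x s) s := by
  have hq := hasDerivAt_Q hs
  have hin := (hq.const_mul (x ^ 2)).add (hq.pow 3)
  have h := ((hasDerivAt_E x s).mul hin).const_mul (-(x / (4 * Real.sqrt (2 * π))))
  refine h.congr_deriv ?_
  rw [G3]; push_cast; simp only [Pi.add_apply, Pi.pow_apply]; ring

lemma hasDerivAt_g (x : ℝ) {s : ℝ} (hs : -1 < s) :
    HasDerivAt (fun s => stdGaussCDF (x * Real.sqrt (1 + s))) (G1 x s) s := by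
  have hinner : HasDerivAt (fun s : ℝ => x * Real.sqrt (1 + s))
      (x * (1 / (2 * Real.sqrt (1 + s)))) s := (hasDerivAt_sqrt1p hs).const_mul x
  have houter := hasDerivAt_stdGaussCDF (x * Real.sqrt (1 + s))
  have hcomp := houter.comp s hinner
  have heq : phi (x * Real.sqrt (1 + s)) * (x * (1 / (2 * Real.sqrt (1 + s)))) = G1 x s := by
    have h1 : (0:ℝ) ≤ 1 + s := by linarith
    have h2 : (x * Real.sqrt (1 + s)) ^ 2 = x ^ 2 * (1 + s) := by
      rw [mul_pow, Real.sq_sqrt h1]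
    rw [phi, G1, E, Q, h2]
    have h3 := (sqrt_pos' hs).ne'
    have h4 := sqrt_two_pi_pos.ne'
    field_simp
  rw [heq] at hcomp
  exact hcomp

/-! ### Bounds -/

lemma x6_exp_le (x : ℝ) : x ^ 6 * Real.exp (-(x ^ 2) / 4) ≤ 1728 := by
  have hu : (0:ℝ) ≤ x ^ 2 / 12 := by positivity
  have h1 : x ^ 2 / 12 + 1 ≤ Real.exp (x ^ 2 / 12) := Real.add_one_le_exp _
  have h2 : (x ^ 2 / 12) ^ 3 ≤ Real.exp (x ^ 2 / 12) ^ 3 :=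
    pow_le_pow_left₀ hu (by linarith) 3
  have h3 : Real.exp (x ^ 2 / 12) ^ 3 = Real.exp (x ^ 2 / 4) := by
    rw [← Real.exp_nat_mul]; norm_num; ring_nf
  have h4 : x ^ 6 / 1728 ≤ Real.exp (x ^ 2 / 4) := by
    rw [← h3]; nlinarith [h2]
  have h5 : Real.exp (-(x ^ 2) / 4) = (Real.exp (x ^ 2 / 4))⁻¹ := by
    rw [← Real.exp_neg]; ring_nf
  rw [h5, ← div_eq_mul_inv, div_le_iff₀ (Real.exp_pos _)]
  nlinarith [h4]

lemma odd_pow_exp_le (x : ℝ) (k : ℕ) (hk : k ≤ 6) :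
    |x| ^ k * Real.exp (-(x ^ 2) / 4) ≤ 1729 := by
  have hA : 0 < Real.exp (-(x ^ 2) / 4) := Real.exp_pos _
  have hA1 : Real.exp (-(x ^ 2) / 4) ≤ 1 := by
    rw [Real.exp_le_one_iff]
    nlinarith [sq_nonneg x]
  have hx6 : |x| ^ 6 = x ^ 6 := by
    rw [← abs_pow]; exact abs_of_nonneg (by positivity)
  have hk1 : |x| ^ k ≤ 1 + |x| ^ 6 := by
    rcases le_total |x| 1 with h | h
    · have := pow_le_one₀ (abs_nonneg x) h (n := k)
      nlinarith [pow_nonneg (abs_nonneg x) 6]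
    · have := pow_le_pow_right₀ h hk
      nlinarith
  have := x6_exp_le x
  nlinarith [mul_le_mul_of_nonneg_right hk1 hA.le]

lemma Q_le_two {s : ℝ} (hs : -(1/2 : ℝ) ≤ s) : Q s ≤ 2 := by
  have h1 : (0:ℝ) ≤ 1 + s := by linarith
  have h2 : (1/2 : ℝ) ≤ Real.sqrt (1 + s) := by
    nlinarith [Real.sq_sqrt h1, Real.sqrt_nonneg (1 + s)]
  rw [Q, inv_eq_one_div, div_le_iff₀ (by linarith)]
  linarith

lemma E_le {x s : ℝ} (hs : -(1/2 : ℝ) ≤ s) : E x s ≤ Real.exp (-(x ^ 2) / 4) := by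
  rw [E, Real.exp_le_exp]
  nlinarith [sq_nonneg x]

lemma G3_bound (x : ℝ) {s : ℝ} (hs : -(1/2 : ℝ) ≤ s) : |G3 x s| ≤ 25000 := by
  have hs1 : -1 < s := by linarith
  have hr0 : 0 < Q s := Q_pos hs1
  have hr2 : Q s ≤ 2 := Q_le_two hs
  have hr3 : Q s ^ 3 ≤ 8 := by
    calc Q s ^ 3 ≤ 2 ^ 3 := pow_le_pow_left₀ hr0.le hr2 3
      _ = 8 := by norm_num
  have hr5 : Q s ^ 5 ≤ 32 := by
    calc Q s ^ 5 ≤ 2 ^ 5 := pow_le_pow_left₀ hr0.le hr2 5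
      _ = 32 := by norm_num
  have hE0 : 0 < E x s := Real.exp_pos _
  have hEA : E x s ≤ Real.exp (-(x ^ 2) / 4) := E_le hs
  have a5 : |x| ^ 5 * E x s ≤ 1729 :=
    le_trans (mul_le_mul_of_nonneg_left hEA (by positivity)) (odd_pow_exp_le x 5 (by norm_num))
  have a3 : |x| ^ 3 * E x s ≤ 1729 :=
    le_trans (mul_le_mul_of_nonneg_left hEA (by positivity)) (odd_pow_exp_le x 3 (by norm_num))
  have a1 : |x| ^ 1 * E x s ≤ 1729 :=
    le_trans (mul_le_mul_of_nonneg_left hEA (by positivity)) (odd_pow_exp_le x 1 (by norm_num))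
  have t1 : (0:ℝ) ≤ x ^ 4 * Q s := mul_nonneg (by positivity) hr0.le
  have t2 : (0:ℝ) ≤ 2 * x ^ 2 * Q s ^ 3 := mul_nonneg (by positivity) (pow_nonneg hr0.le 3)
  have t3 : (0:ℝ) ≤ 3 * Q s ^ 5 := mul_nonneg (by norm_num) (pow_nonneg hr0.le 5)
  have hT0 : (0:ℝ) ≤ x ^ 4 * Q s + 2 * x ^ 2 * Q s ^ 3 + 3 * Q s ^ 5 := by linarith
  have hET0 : (0:ℝ) ≤ E x s * (x ^ 4 * Q s + 2 * x ^ 2 * Q s ^ 3 + 3 * Q s ^ 5) :=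
    mul_nonneg hE0.le hT0
  have key : |x| * (E x s * (x ^ 4 * Q s + 2 * x ^ 2 * Q s ^ 3 + 3 * Q s ^ 5)) ≤ 197200 := by
    have h4 : x ^ 4 = |x| ^ 4 := by rw [← abs_pow]; exact (abs_of_nonneg (by positivity)).symm
    have h2 : x ^ 2 = |x| ^ 2 := by rw [← abs_pow]; exact (abs_of_nonneg (by positivity)).symm
    have expand : |x| * (E x s * (x ^ 4 * Q s + 2 * x ^ 2 * Q s ^ 3 + 3 * Q s ^ 5))
        = (|x| ^ 5 * E x s) * Q s + 2 * ((|x| ^ 3 * E x s) * Q s ^ 3)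
          + 3 * ((|x| ^ 1 * E x s) * Q s ^ 5) := by
      rw [h4, h2]; ring
    rw [expand]
    have b1 : (|x| ^ 5 * E x s) * Q s ≤ 1729 * 2 :=
      mul_le_mul a5 hr2 hr0.le (by norm_num)
    have b2 : (|x| ^ 3 * E x s) * Q s ^ 3 ≤ 1729 * 8 :=
      mul_le_mul a3 hr3 (pow_nonneg hr0.le 3) (by norm_num)
    have b3 : (|x| ^ 1 * E x s) * Q s ^ 5 ≤ 1729 * 32 :=
      mul_le_mul a1 hr5 (pow_nonneg hr0.le 5) (by norm_num)
    linarith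
  have hstep : |G3 x s|
      = |x| * (E x s * (x ^ 4 * Q s + 2 * x ^ 2 * Q s ^ 3 + 3 * Q s ^ 5))
        / (8 * Real.sqrt (2 * π)) := by
    rw [G3, abs_mul, abs_div, abs_of_pos (show (0:ℝ) < 8 * Real.sqrt (2 * π) by positivity),
      abs_of_nonneg hET0, div_mul_eq_mul_div]
  rw [hstep]
  have h8 : (8:ℝ) ≤ 8 * Real.sqrt (2 * π) := by nlinarith [one_le_sqrt_two_pi]
  have hd : |x| * (E x s * (x ^ 4 * Q s + 2 * x ^ 2 * Q s ^ 3 + 3 * Q s ^ 5))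
      / (8 * Real.sqrt (2 * π))
      ≤ |x| * (E x s * (x ^ 4 * Q s + 2 * x ^ 2 * Q s ^ 3 + 3 * Q s ^ 5)) / 8 := by
    gcongr
  calc _ ≤ _ := hd
    _ ≤ 197200 / 8 := by linarith
    _ ≤ 25000 := by norm_num

end GaussPerturb

open GaussPerturb in
/-- The cdf of a centered Gaussian with variance `σ²` is `x ↦ Φ(x/σ)`; with
`a = (1+ε)⁻¹` and `b = (1−ε)⁻¹` this gives `Φ_a(x) = Φ(x√(1+ε))` and
`Φ_b(x) = Φ(x√(1−ε))`. -/
theorem gaussian_cdf_variance_perturbation :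
    ∃ C : ℝ, 0 < C ∧ ∃ ε₀ : ℝ, 0 < ε₀ ∧ ε₀ < 1 ∧
      ∀ ε : ℝ, 0 < ε → ε < ε₀ → ∀ x : ℝ,
        |stdGaussCDF (x * Real.sqrt (1 + ε)) - stdGaussCDF (x * Real.sqrt (1 - ε))
          - ε * (x * Real.exp (-x ^ 2 / 2) / Real.sqrt (2 * π))| ≤ C * ε ^ 3 := by
  refine ⟨50000, by norm_num, 1/2, by norm_num, by norm_num, ?_⟩
  intro ε hε hε2 x
  have hmem1 : ∀ s ∈ Icc (-ε) ε, (-1:ℝ) < s := by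
    rintro s ⟨h1, h2⟩; linarith
  have hmemhalf : ∀ s ∈ Icc (-ε) ε, -(1/2:ℝ) ≤ s := by
    rintro s ⟨h1, h2⟩; linarith
  -- Lipschitz bound for G2 on [-ε, ε] with constant 25000 (bound on G3)
  have hG2lip : ∀ y ∈ Icc (-ε) ε, ∀ z ∈ Icc (-ε) ε,
      |G2 x y - G2 x z| ≤ 25000 * |y - z| := by
    intro y hy z hz
    have := Convex.norm_image_sub_le_of_norm_hasDerivWithin_le
      (f := G2 x) (f' := G3 x) (s := Icc (-ε) ε)
      (fun u hu => (hasDerivAt_G2 x (hmem1 u hu)).hasDerivWithinAt)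
      (fun u hu => by rw [Real.norm_eq_abs]; exact G3_bound x (hmemhalf u hu))
      (convex_Icc _ _) hz hy
    simpa [Real.norm_eq_abs] using this
  set P1 : ℝ → ℝ := fun t => G1 x t + G1 x (-t) with hP1def
  have hP1deriv : ∀ t ∈ Icc (0:ℝ) ε, HasDerivAt P1 (G2 x t - G2 x (-t)) t := by
    rintro t ⟨h1, h2⟩
    have ha : (-1:ℝ) < t := by linarith
    have hb : (-1:ℝ) < -t := by linarith
    have d1 := hasDerivAt_G1 x ha
    have d2 : HasDerivAt (fun t : ℝ => G1 x (-t)) (-(G2 x (-t))) t := by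
      have := (hasDerivAt_G1 x hb).comp t (hasDerivAt_neg t)
      simpa [Function.comp_def] using this
    exact (d1.add d2).congr_deriv (sub_eq_add_neg _ _).symm
  have hP1bound : ∀ t ∈ Icc (0:ℝ) ε, |G2 x t - G2 x (-t)| ≤ 50000 * ε := by
    rintro t ⟨h1, h2⟩
    have hmt : t ∈ Icc (-ε) ε := ⟨by linarith, h2⟩
    have hmmt : -t ∈ Icc (-ε) ε := ⟨by linarith, by linarith⟩
    have h := hG2lip t hmt (-t) hmmt
    have habs : |t - -t| = 2 * t := by
      rw [sub_neg_eq_add, abs_of_nonneg (by linarith)]; ring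
    rw [habs] at h
    linarith
  have hP1diff : ∀ t ∈ Icc (0:ℝ) ε, |P1 t - P1 0| ≤ 50000 * ε ^ 2 := by
    intro t ht
    have h := Convex.norm_image_sub_le_of_norm_hasDerivWithin_le
      (f := P1) (f' := fun t => G2 x t - G2 x (-t)) (s := Icc (0:ℝ) ε)
      (fun u hu => (hP1deriv u hu).hasDerivWithinAt)
      (fun u hu => by rw [Real.norm_eq_abs]; exact hP1bound u hu)
      (convex_Icc _ _) ⟨le_refl 0, hε.le⟩ ht
    rw [Real.norm_eq_abs, Real.norm_eq_abs, sub_zero, abs_of_nonneg ht.1] at h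
    nlinarith [ht.1, ht.2]
  set F : ℝ → ℝ := fun t => stdGaussCDF (x * Real.sqrt (1 + t))
      - stdGaussCDF (x * Real.sqrt (1 + -t)) - t * P1 0 with hFdef
  have hFderiv : ∀ t ∈ Icc (0:ℝ) ε, HasDerivAt F (P1 t - P1 0) t := by
    rintro t ⟨h1, h2⟩
    have ha : (-1:ℝ) < t := by linarith
    have hb : (-1:ℝ) < -t := by linarith
    have d1 := hasDerivAt_g x ha
    have d2 : HasDerivAt (fun t : ℝ => stdGaussCDF (x * Real.sqrt (1 + -t)))
        (-(G1 x (-t))) t := by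
      have := (hasDerivAt_g x hb).comp t (hasDerivAt_neg t)
      simpa [Function.comp_def] using this
    have d3 : HasDerivAt (fun t : ℝ => t * P1 0) (P1 0) t := by
      simpa using (hasDerivAt_id t).mul_const (P1 0)
    have hcomb := (d1.sub d2).sub d3
    refine hcomb.congr_deriv ?_
    simp only [hP1def]
    ring
  have hfinal := Convex.norm_image_sub_le_of_norm_hasDerivWithin_le
      (f := F) (f' := fun t => P1 t - P1 0) (s := Icc (0:ℝ) ε)
      (fun u hu => (hFderiv u hu).hasDerivWithinAt)
      (fun u hu => by rw [Real.norm_eq_abs]; exact hP1diff u hu)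
      (convex_Icc _ _) ⟨le_refl 0, hε.le⟩ ⟨hε.le, le_refl ε⟩
  rw [Real.norm_eq_abs, Real.norm_eq_abs, sub_zero, abs_of_pos hε] at hfinal
  have hF0 : F 0 = 0 := by simp [hFdef]
  have hP10 : P1 0 = x * Real.exp (-x ^ 2 / 2) / Real.sqrt (2 * π) := by
    simp only [hP1def, neg_zero]
    rw [G1, E, Q]
    rw [show (1:ℝ) + 0 = 1 by ring, Real.sqrt_one, inv_one,
      show -(x ^ 2 * 1) / 2 = -x ^ 2 / 2 by ring]
    have h4 := sqrt_two_pi_pos.ne'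
    field_simp
    ring
  have hkey : F ε - F 0 = stdGaussCDF (x * Real.sqrt (1 + ε)) - stdGaussCDF (x * Real.sqrt (1 - ε))
      - ε * (x * Real.exp (-x ^ 2 / 2) / Real.sqrt (2 * π)) := by
    rw [hF0, sub_zero]
    simp only [hFdef]
    rw [hP10, show (1:ℝ) + -ε = 1 - ε by ring]
  calc |stdGaussCDF (x * Real.sqrt (1 + ε)) - stdGaussCDF (x * Real.sqrt (1 - ε))
        - ε * (x * Real.exp (-x ^ 2 / 2) / Real.sqrt (2 * π))|
      = |F ε - F 0| := by rw [hkey]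
    _ ≤ 50000 * ε ^ 2 * ε := hfinal
    _ = 50000 * ε ^ 3 := by ring
end

section
/- Let X be a real random variable whose law is purely atomic (X takes values in a countable set almost surely) and non-lattice (there exist no reals a and h > 0 with P(X ∈ a + hℤ) = 1), with characteristic function f(t) = E[e^{itX}]. Then for every η > 0 there exists a function λ on the positive integers with λ(k) → ∞ as k → ∞ such that √k · ∫_{η}^{λ(k)} |f(t)|^k / t dt → 0 as k → ∞. -/
open MeasureTheory ProbabilityTheory Filter Real Set

/-- Characteristic function of a measure on `ℝ`. -/
noncomputable def charFn (μ : Measure ℝ) (t : ℝ) : ℂ :=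
  ∫ x, Complex.exp (Complex.I * (t * x)) ∂μ

/-- A purely atomic (discrete) law: the variable takes values in a countable set a.s. -/
def IsPurelyAtomic (μ : Measure ℝ) : Prop :=
  ∃ S : Set ℝ, S.Countable ∧ μ S = 1

/-- A non-lattice law: no `a` and `h > 0` with `P(X ∈ a + hℤ) = 1`. -/
def IsNonLattice (μ : Measure ℝ) : Prop :=
  ¬ ∃ a h : ℝ, 0 < h ∧ μ {x : ℝ | ∃ z : ℤ, x = a + h * z} = 1

lemma norm_cexp_real_mul_I (s : ℝ) : ‖Complex.exp ((s : ℂ) * Complex.I)‖ = 1 := by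
  rw [Complex.norm_exp_ofReal_mul_I]

lemma integrable_cexp (μ : Measure ℝ) [IsProbabilityMeasure μ] {φ : ℝ → ℝ}
    (hφ : Continuous φ) : Integrable (fun x => Complex.exp ((φ x : ℂ) * Complex.I)) μ := by
  refine (integrable_const (1:ℝ)).mono' ?_ ?_
  · exact (Complex.continuous_exp.comp
      ((Complex.continuous_ofReal.comp hφ).mul continuous_const)).aestronglyMeasurable
  · filter_upwards with x
    rw [norm_cexp_real_mul_I]

lemma charFn_eq (μ : Measure ℝ) (t : ℝ) :
    charFn μ t = ∫ x, Complex.exp (((t * x : ℝ) : ℂ) * Complex.I) ∂μ := by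
  unfold charFn
  congr 1 with x
  push_cast
  ring_nf

lemma charFn_continuous (μ : Measure ℝ) [IsProbabilityMeasure μ] :
    Continuous (charFn μ) := by
  simp only [funext (charFn_eq μ)]
  apply continuous_of_dominated (bound := fun _ => (1:ℝ))
  · intro t
    exact (Complex.continuous_exp.comp
      ((Complex.continuous_ofReal.comp (continuous_const.mul continuous_id)).mul
        continuous_const)).aestronglyMeasurable
  · intro t
    filter_upwards with x
    rw [norm_cexp_real_mul_I]
  · exact integrable_const 1
  · filter_upwards with x
    exact Complex.continuous_exp.comp
      ((Complex.continuous_ofReal.comp (continuous_id.mul continuous_const)).mul continuous_const)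

lemma norm_charFn_le_one (μ : Measure ℝ) [IsProbabilityMeasure μ] (t : ℝ) :
    ‖charFn μ t‖ ≤ 1 := by
  rw [charFn_eq]
  calc ‖∫ x, Complex.exp (((t * x : ℝ) : ℂ) * Complex.I) ∂μ‖
      ≤ ∫ x, ‖Complex.exp (((t * x : ℝ) : ℂ) * Complex.I)‖ ∂μ := norm_integral_le_integral_norm _
    _ = 1 := by simp only [norm_cexp_real_mul_I]; simp

lemma norm_charFn_lt_one (μ : Measure ℝ) [IsProbabilityMeasure μ]
    (hnl : IsNonLattice μ) {t : ℝ} (ht : t ≠ 0) : ‖charFn μ t‖ < 1 := by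
  rcases lt_or_eq_of_le (norm_charFn_le_one μ t) with h | h1
  · exact h
  exfalso
  set θ := (charFn μ t).arg with hθ
  have hz : charFn μ t = Complex.exp ((θ : ℂ) * Complex.I) := by
    conv_lhs => rw [← Complex.norm_mul_exp_arg_mul_I (charFn μ t)]
    rw [← hθ, h1]
    simp
  have hint : Integrable (fun x => Complex.exp (((t * x - θ : ℝ) : ℂ) * Complex.I)) μ :=
    integrable_cexp μ ((continuous_const.mul continuous_id).sub continuous_const)
  have key : ∫ x, Complex.exp (((t * x - θ : ℝ) : ℂ) * Complex.I) ∂μ = 1 := by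
    have e1 : ∀ x : ℝ, Complex.exp (((t * x - θ : ℝ) : ℂ) * Complex.I)
        = Complex.exp ((-θ : ℂ) * Complex.I) * Complex.exp (((t * x : ℝ) : ℂ) * Complex.I) := by
      intro x
      rw [← Complex.exp_add]
      congr 1
      push_cast
      ring
    simp only [e1]
    rw [integral_const_mul, ← charFn_eq, hz, ← Complex.exp_add,
      show (-θ : ℂ) * Complex.I + (θ : ℂ) * Complex.I = 0 by ring, Complex.exp_zero]
  have hcos_int : Integrable (fun x => Real.cos (t * x - θ)) μ := by
    refine (integrable_const (1:ℝ)).mono' ?_ ?_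
    · exact (Real.continuous_cos.comp
        ((continuous_const.mul continuous_id).sub continuous_const)).aestronglyMeasurable
    · filter_upwards with x
      simp [Real.norm_eq_abs, Real.abs_cos_le_one]
  have re_key : ∫ x, Real.cos (t * x - θ) ∂μ = 1 := by
    have h2 := integral_re hint (μ := μ)
    rw [key] at h2
    simp only [RCLike.re_eq_complex_re, Complex.one_re] at h2
    rw [← h2]
    congr 1 with x
    rw [Complex.exp_ofReal_mul_I_re]
  have h0 : ∫ x, (1 - Real.cos (t * x - θ)) ∂μ = 0 := by
    rw [integral_sub (integrable_const 1) hcos_int, re_key]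
    simp
  have hae : ∀ᵐ x ∂μ, 1 - Real.cos (t * x - θ) = 0 := by
    have hnn : 0 ≤ᵐ[μ] fun x => 1 - Real.cos (t * x - θ) := by
      filter_upwards with x
      simp only [Pi.zero_apply, sub_nonneg]
      exact Real.cos_le_one _
    have h3 := (integral_eq_zero_iff_of_nonneg_ae hnn
      ((integrable_const 1).sub hcos_int)).mp h0
    filter_upwards [h3] with x hx using hx
  have htabs : (0:ℝ) < |t| := abs_pos.mpr ht
  have hsub : ∀ᵐ x ∂μ, x ∈ {x : ℝ | ∃ z : ℤ, x = θ / t + (2 * π / |t|) * z} := by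
    filter_upwards [hae] with x hx
    have hcx : Real.cos (t * x - θ) = 1 := by linarith
    obtain ⟨n, hn⟩ := (Real.cos_eq_one_iff _).mp hcx
    have htx : t * x = θ + (n : ℝ) * (2 * π) := by linarith
    rcases ht.lt_or_gt with htn | htp
    · refine ⟨-n, ?_⟩
      rw [abs_of_neg htn]
      push_cast
      field_simp
      nlinarith [htx]
    · refine ⟨n, ?_⟩
      rw [abs_of_pos htp]
      field_simp
      nlinarith [htx]
  apply hnl
  refine ⟨θ / t, 2 * π / (|t|), by positivity, ?_⟩
  refine le_antisymm prob_le_one ?_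
  calc (1 : ENNReal) = μ univ := measure_univ.symm
    _ ≤ μ {x : ℝ | ∃ z : ℤ, x = θ / t + (2 * π / |t|) * z} := by
        apply measure_mono_ae
        filter_upwards [hsub] with x hx
        exact fun _ => hx

/-- Esseen's lemma for non-lattice discrete laws:
`∫_η^{λ(k)} |f(t)|^k / t dt = o(k^{-1/2})`. -/
theorem esseen_nonlattice_discrete
    (μ : Measure ℝ) [IsProbabilityMeasure μ]
    (hatomic : IsPurelyAtomic μ) (hnonlattice : IsNonLattice μ) :
    ∀ η : ℝ, 0 < η →
      ∃ lam : ℕ → ℝ, Tendsto lam atTop atTop ∧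
        Tendsto (fun k : ℕ => Real.sqrt k * ∫ t in η..(lam k), ‖charFn μ t‖ ^ k / t)
          atTop (nhds 0) := by
  intro η hη
  classical
  have hsqrt : ∀ k : ℕ, Real.sqrt k ≤ k := by
    intro k
    calc Real.sqrt k ≤ Real.sqrt ((k : ℝ) ^ 2) := by
          apply Real.sqrt_le_sqrt
          exact_mod_cast Nat.le_self_pow two_ne_zero k
      _ = k := Real.sqrt_sq (Nat.cast_nonneg k)
  have hnn : ∀ (k : ℕ) (M : ℝ), η ≤ M →
      0 ≤ Real.sqrt k * ∫ t in η..M, ‖charFn μ t‖ ^ k / t := by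
    intro k M hM
    apply mul_nonneg (Real.sqrt_nonneg _)
    apply intervalIntegral.integral_nonneg hM
    intro x hx
    exact div_nonneg (pow_nonneg (norm_nonneg _) _) (le_of_lt (lt_of_lt_of_le hη hx.1))
  have main : ∀ M : ℝ, η ≤ M →
      Tendsto (fun k : ℕ => Real.sqrt k * ∫ t in η..M, ‖charFn μ t‖ ^ k / t) atTop (nhds 0) := by
    intro M hM
    obtain ⟨t₀, ht₀, hmax⟩ := isCompact_Icc.exists_isMaxOn ⟨η, le_refl η, hM⟩
      ((charFn_continuous μ).norm.continuousOn (s := Icc η M))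
    set c := ‖charFn μ t₀‖ with hc
    have hc0 : 0 ≤ c := norm_nonneg _
    have hc1 : c < 1 := norm_charFn_lt_one μ hnonlattice (ne_of_gt (lt_of_lt_of_le hη ht₀.1))
    have hcont : ∀ k : ℕ, ContinuousOn (fun t => ‖charFn μ t‖ ^ k / t) (uIcc η M) := by
      intro k
      rw [uIcc_of_le hM]
      exact ContinuousOn.div (((charFn_continuous μ).norm.pow k).continuousOn)
        continuousOn_id (fun x hx => ne_of_gt (lt_of_lt_of_le hη hx.1))
    have hbound : ∀ k : ℕ, (∫ t in η..M, ‖charFn μ t‖ ^ k / t) ≤ (M - η) * (c ^ k / η) := by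
      intro k
      have h1 : (∫ _ in η..M, (c ^ k / η : ℝ)) = (M - η) * (c ^ k / η) := by
        rw [intervalIntegral.integral_const]
        simp [smul_eq_mul]
      rw [← h1]
      apply intervalIntegral.integral_mono_on hM ((hcont k).intervalIntegrable)
        intervalIntegrable_const
      intro x hx
      exact div_le_div₀ (pow_nonneg hc0 k)
        (pow_le_pow_left₀ (norm_nonneg _) (hmax hx) k) hη hx.1
    have hten : Tendsto (fun k : ℕ => ((M - η) / η) * ((k : ℝ) * c ^ k)) atTop (nhds 0) := by
      have h2 := (tendsto_self_mul_const_pow_of_lt_one hc0 hc1).const_mul ((M - η) / η)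
      simpa using h2
    refine squeeze_zero (fun k => hnn k M hM) (fun k => ?_) hten
    have hMη : 0 ≤ M - η := sub_nonneg.mpr hM
    calc Real.sqrt k * ∫ t in η..M, ‖charFn μ t‖ ^ k / t
        ≤ Real.sqrt k * ((M - η) * (c ^ k / η)) :=
          mul_le_mul_of_nonneg_left (hbound k) (Real.sqrt_nonneg _)
      _ ≤ (k : ℝ) * ((M - η) * (c ^ k / η)) := by
          apply mul_le_mul_of_nonneg_right (hsqrt k)
          positivity
      _ = ((M - η) / η) * ((k : ℝ) * c ^ k) := by ring
  set m0 : ℕ := ⌈η⌉₊ + 1 with hm0def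
  have hm0η : η < (m0 : ℝ) := by
    have h1 := Nat.le_ceil η
    have h2 : ((⌈η⌉₊ : ℝ)) < ((m0 : ℕ) : ℝ) := by
      exact_mod_cast Nat.lt_succ_self ⌈η⌉₊
    linarith
  have hm0pos : 0 < m0 := Nat.succ_pos _
  set Q : ℕ → ℕ → Prop := fun k m => m0 ≤ m ∧
    Real.sqrt k * (∫ t in η..(m : ℝ), ‖charFn μ t‖ ^ k / t) ≤ 1 / (m : ℝ) with hQdef
  set lamN : ℕ → ℕ := fun k => Nat.findGreatest (Q k) k with hlamNdef
  have hQ_ev : ∀ m : ℕ, m0 ≤ m → ∀ᶠ k in atTop, Q k m := by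
    intro m hm
    have hηm : η ≤ (m : ℝ) := le_of_lt (lt_of_lt_of_le hm0η (by exact_mod_cast hm))
    have hpos : (0:ℝ) < 1 / m := by
      apply one_div_pos.mpr
      exact_mod_cast lt_of_lt_of_le hm0pos hm
    filter_upwards [(main m hηm).eventually (eventually_le_nhds hpos)] with k hk
    exact ⟨hm, hk⟩
  have hlamN : Tendsto lamN atTop atTop := by
    apply tendsto_atTop_atTop.mpr
    intro b
    obtain ⟨N, hN⟩ := eventually_atTop.mp (hQ_ev (max b m0) (le_max_right _ _))
    refine ⟨max N (max b m0), fun k hk => ?_⟩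
    have h1 : N ≤ k := le_trans (le_max_left _ _) hk
    have h2 : max b m0 ≤ k := le_trans (le_max_right _ _) hk
    exact le_trans (le_max_left b m0) (Nat.le_findGreatest h2 (hN k h1))
  refine ⟨fun k => max (m0 : ℝ) (lamN k), ?_, ?_⟩
  · exact tendsto_atTop_mono (fun k => le_max_right _ _)
      (tendsto_natCast_atTop_atTop.comp hlamN)
  · have hev : ∀ᶠ k in atTop, m0 ≤ lamN k := hlamN.eventually_ge_atTop m0
    have hbound2 : ∀ᶠ k : ℕ in atTop,
        Real.sqrt k * (∫ t in η..(max (m0 : ℝ) (lamN k)), ‖charFn μ t‖ ^ k / t)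
          ≤ 1 / ((lamN k : ℕ) : ℝ) := by
      filter_upwards [hev, hQ_ev m0 le_rfl] with k hk hQ0
      have hmax : max (m0 : ℝ) ((lamN k : ℕ) : ℝ) = ((lamN k : ℕ) : ℝ) :=
        max_eq_right (by exact_mod_cast hk)
      rw [hmax]
      have hQk : Q k (lamN k) := by
        have hk0 : m0 ≤ k := le_trans hk (Nat.findGreatest_le k)
        exact Nat.findGreatest_spec hk0 hQ0
      exact hQk.2
    have hnn2 : ∀ᶠ k : ℕ in atTop, 0 ≤
        Real.sqrt k * (∫ t in η..(max (m0 : ℝ) (lamN k)), ‖charFn μ t‖ ^ k / t) := by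
      filter_upwards with k
      exact hnn k _ (le_trans hm0η.le (le_max_left _ _))
    have hten2 : Tendsto (fun k : ℕ => 1 / ((lamN k : ℕ) : ℝ)) atTop (nhds 0) := by
      simp only [one_div]
      exact tendsto_inv_atTop_zero.comp (tendsto_natCast_atTop_atTop.comp hlamN)
    exact squeeze_zero' hnn2 hbound2 hten2
end
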